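/- For integers $n \geq 2$ and $m \geq 1$ with $m$ even (resp. odd), one has $\sum_{i=1}^{n}\binom{n}{i}\sum_{0 \leq j \leq i-1,\ j \equiv m \pmod 2} \binom{j+m-1}{i-1}\binom{i-1}{j} = \sum_{i=1}^{n-1} 2^{i-1}\binom{m+i-1}{i} + \varepsilon$, where $\varepsilon = 1$ if $m$ is even and $\varepsilon = 0$ if $m$ is odd. -/

import Mathlib

open Finset

/-- Trinomial revision without side conditions on the top index. -/
lemma trinom (a b c : ℕ) (h : c ≤ b) :
    a.choose b * b.choose c = a.choose c * (a - c).choose (b - c) := by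
  rcases le_or_gt b a with hba | hba
  · exact Nat.choose_mul h
  · rw [Nat.choose_eq_zero_of_lt hba, zero_mul]
    rcases le_or_gt c a with hca | hca
    · rw [Nat.choose_eq_zero_of_lt (show a - c < b - c by omega), mul_zero]
    · rw [Nat.choose_eq_zero_of_lt hca, zero_mul]

/-- Vandermonde specialization. -/
lemma vdm (n m' j : ℕ) (hj : j < n) :
    ∑ k ∈ Finset.range (n - j), n.choose (j + 1 + k) * m'.choose k
      = (n + m').choose (j + m' + 1) := by
  have ext1 : ∑ k ∈ Finset.range (n - j), n.choose (j + 1 + k) * m'.choose k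
      = ∑ k ∈ Finset.range (n + m'), n.choose (j + 1 + k) * m'.choose k := by
    apply Finset.sum_subset (Finset.range_subset_range.2 (by omega))
    intro k hk hk2
    simp only [Finset.mem_range] at hk hk2
    rw [Nat.choose_eq_zero_of_lt (show n < j + 1 + k by omega), zero_mul]
  have hv : (n + m').choose (j + m' + 1)
      = ∑ a ∈ Finset.range ((j + 1) + (m' + 1)), n.choose a * m'.choose (j + m' + 1 - a) := by
    rw [Nat.add_choose_eq, Finset.Nat.sum_antidiagonal_eq_sum_range_succ_mk]
    exact Finset.sum_congr (by congr 1; omega) (fun a _ => rfl)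
  have hv2 : ∑ a ∈ Finset.range ((j + 1) + (m' + 1)), n.choose a * m'.choose (j + m' + 1 - a)
      = ∑ k ∈ Finset.range (n + m'), n.choose (j + 1 + k) * m'.choose k := by
    rw [Finset.sum_range_add]
    have h1 : ∑ i ∈ Finset.range (j + 1), n.choose i * m'.choose (j + m' + 1 - i) = 0 := by
      apply Finset.sum_eq_zero
      intro i hi
      simp only [Finset.mem_range] at hi
      rw [Nat.choose_eq_zero_of_lt (show m' < j + m' + 1 - i by omega), mul_zero]
    rw [h1, zero_add]
    have h2 : ∀ k ∈ Finset.range (m' + 1),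
        n.choose (j + 1 + k) * m'.choose (j + m' + 1 - (j + 1 + k))
          = n.choose (j + 1 + k) * m'.choose k := by
      intro k hk
      simp only [Finset.mem_range] at hk
      rw [show j + m' + 1 - (j + 1 + k) = m' - k by omega, Nat.choose_symm (by omega)]
    rw [Finset.sum_congr rfl h2]
    apply Finset.sum_subset (Finset.range_subset_range.2 (by omega))
    intro k hk hk2
    simp only [Finset.mem_range] at hk hk2
    rw [Nat.choose_eq_zero_of_lt (show m' < k by omega), mul_zero]
  rw [ext1, hv, hv2]

/-- Row-sum lemma: `∑_j C(j+m',m') C(n+m', j+m') = 2^n C(n+m', m')`. -/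
lemma subF (n m' : ℕ) :
    ∑ j ∈ Finset.range (n + 1), ((j + m').choose m' : ℤ) * (n + m').choose (j + m')
      = (n + m').choose m' * 2 ^ n := by
  have key : ∀ j ∈ Finset.range (n + 1),
      ((j + m').choose m' : ℤ) * (n + m').choose (j + m')
        = ((n + m').choose m' : ℤ) * n.choose j := by
    intro j hj
    simp only [Finset.mem_range] at hj
    have h0 := trinom (n + m') (j + m') m' (by omega)
    have e1 : n + m' - m' = n := by omega
    have e2 : j + m' - m' = j := by omega
    rw [e1, e2] at h0
    have h3 : (j + m').choose m' * (n + m').choose (j + m')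
        = (n + m').choose m' * n.choose j := by rw [mul_comm]; exact h0
    exact_mod_cast h3
  rw [Finset.sum_congr rfl key, ← Finset.mul_sum]
  congr 1
  exact_mod_cast Nat.sum_range_choose n

/-- Alternating row-sum lemma. -/
lemma subA (n m' : ℕ) (hn : 1 ≤ n) :
    ∑ j ∈ Finset.range (n + 1), (-1 : ℤ) ^ j * (j + m').choose m' * (n + m').choose (j + m')
      = 0 := by
  have key : ∀ j ∈ Finset.range (n + 1),
      (-1 : ℤ) ^ j * (j + m').choose m' * (n + m').choose (j + m')
        = ((n + m').choose m' : ℤ) * ((-1 : ℤ) ^ j * n.choose j) := by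
    intro j hj
    simp only [Finset.mem_range] at hj
    have h0 := trinom (n + m') (j + m') m' (by omega)
    have e1 : n + m' - m' = n := by omega
    have e2 : j + m' - m' = j := by omega
    rw [e1, e2] at h0
    have h3 : (j + m').choose m' * (n + m').choose (j + m')
        = (n + m').choose m' * n.choose j := by rw [mul_comm]; exact h0
    have : ((j + m').choose m' : ℤ) * (n + m').choose (j + m')
        = ((n + m').choose m' : ℤ) * n.choose j := by exact_mod_cast h3
    calc (-1 : ℤ) ^ j * (j + m').choose m' * (n + m').choose (j + m')
        = (-1 : ℤ) ^ j * (((j + m').choose m' : ℤ) * (n + m').choose (j + m')) := by ring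
      _ = ((n + m').choose m' : ℤ) * ((-1 : ℤ) ^ j * n.choose j) := by rw [this]; ring
  rw [Finset.sum_congr rfl key, ← Finset.mul_sum,
    Int.alternating_sum_range_choose_of_ne (by omega), mul_zero]

/-- The full (unsigned) sum. -/
lemma claimF (m' : ℕ) : ∀ n : ℕ,
    ∑ j ∈ Finset.range n, ((j + m').choose m' : ℤ) * (n + m').choose (j + m' + 1)
      = ∑ i ∈ Finset.range n, 2 ^ i * ((m' + i).choose i : ℤ) := by
  intro n
  induction n with
  | zero => simp
  | succ n ih =>
    have pascal : ∀ j ∈ Finset.range (n + 1),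
        ((j + m').choose m' : ℤ) * (n + 1 + m').choose (j + m' + 1)
          = ((j + m').choose m' : ℤ) * (n + m').choose (j + m')
            + ((j + m').choose m' : ℤ) * (n + m').choose (j + m' + 1) := by
      intro j hj
      have : (n + 1 + m') = (n + m') + 1 := by ring
      rw [this, Nat.choose_succ_succ' (n + m') (j + m')]
      push_cast
      ring
    rw [Finset.sum_congr rfl pascal, Finset.sum_add_distrib, subF n m']
    have drop : ∑ j ∈ Finset.range (n + 1), ((j + m').choose m' : ℤ) * (n + m').choose (j + m' + 1)
        = ∑ j ∈ Finset.range n, ((j + m').choose m' : ℤ) * (n + m').choose (j + m' + 1) := by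
      rw [Finset.sum_range_succ, Nat.choose_eq_zero_of_lt (show n + m' < n + m' + 1 by omega)]
      simp
    rw [drop, ih, Finset.sum_range_succ]
    have : ((n + m').choose m' : ℤ) = (m' + n).choose n := by
      rw [Nat.choose_symm_of_eq_add (show n + m' = m' + n by omega), Nat.add_comm n m']
    rw [this]
    ring

/-- The alternating sum. -/
lemma claimA (m' : ℕ) : ∀ n : ℕ, 1 ≤ n →
    ∑ j ∈ Finset.range n, (-1 : ℤ) ^ j * (j + m').choose m' * (n + m').choose (j + m' + 1)
      = 1 := by
  intro n
  induction n with
  | zero => omega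
  | succ n ih =>
    intro _
    rcases Nat.eq_zero_or_pos n with hn0 | hn1
    · subst hn0
      rw [Finset.sum_range_one]
      simp [Nat.add_comm]
    · have pascal : ∀ j ∈ Finset.range (n + 1),
          (-1 : ℤ) ^ j * (j + m').choose m' * (n + 1 + m').choose (j + m' + 1)
            = (-1 : ℤ) ^ j * (j + m').choose m' * (n + m').choose (j + m')
              + (-1 : ℤ) ^ j * (j + m').choose m' * (n + m').choose (j + m' + 1) := by
        intro j hj
        have : (n + 1 + m') = (n + m') + 1 := by ring
        rw [this, Nat.choose_succ_succ' (n + m') (j + m')]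
        push_cast
        ring
      rw [Finset.sum_congr rfl pascal, Finset.sum_add_distrib, subA n m' hn1, zero_add]
      have drop : ∑ j ∈ Finset.range (n + 1),
          (-1 : ℤ) ^ j * (j + m').choose m' * (n + m').choose (j + m' + 1)
          = ∑ j ∈ Finset.range n,
              (-1 : ℤ) ^ j * (j + m').choose m' * (n + m').choose (j + m' + 1) := by
        rw [Finset.sum_range_succ, Nat.choose_eq_zero_of_lt (show n + m' < n + m' + 1 by omega)]
        simp
      rw [drop, ih hn1]

/-- For `n ≥ 2` and `m ≥ 1`,
`∑_{i=1}^{n} C(n,i) ∑_{0 ≤ j ≤ i-1, j ≡ m (mod 2)} C(j+m-1, i-1) C(i-1, j)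
  = ∑_{i=1}^{n-1} 2^{i-1} C(m+i-1, i) + ε`, where `ε = 1` if `m` is even, else `0`. -/
theorem rank_tau_eq (n m : ℕ) (hn : 2 ≤ n) (hm : 1 ≤ m) :
    ∑ i ∈ Finset.Icc 1 n, n.choose i *
        ∑ j ∈ (Finset.range i).filter (fun j => j % 2 = m % 2),
          (j + m - 1).choose (i - 1) * (i - 1).choose j
      = (∑ i ∈ Finset.Icc 1 (n - 1), 2 ^ (i - 1) * (m + i - 1).choose i)
        + if Even m then 1 else 0 := by
  obtain ⟨m', rfl⟩ : ∃ m', m = m' + 1 := ⟨m - 1, by omega⟩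
  set m := m' + 1 with hmdef
  -- Step 1 : rewrite LHS as a filtered single sum
  have step1 : ∑ i ∈ Finset.Icc 1 n, n.choose i *
        ∑ j ∈ (Finset.range i).filter (fun j => j % 2 = m % 2),
          (j + m - 1).choose (i - 1) * (i - 1).choose j
      = ∑ j ∈ (Finset.range n).filter (fun j => j % 2 = m % 2),
          (j + m').choose m' * (n + m').choose (j + m' + 1) := by
    -- reindex i = i' + 1
    have reidx : ∑ i ∈ Finset.Icc 1 n, n.choose i *
          ∑ j ∈ (Finset.range i).filter (fun j => j % 2 = m % 2),
            (j + m - 1).choose (i - 1) * (i - 1).choose j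
        = ∑ i' ∈ Finset.range n, ∑ j ∈ (Finset.range (i' + 1)).filter (fun j => j % 2 = m % 2),
            n.choose (i' + 1) * ((j + m').choose i' * i'.choose j) := by
      rw [show Finset.Icc 1 n = Finset.Ico 1 (n + 1) by rfl, Finset.sum_Ico_eq_sum_range]
      simp only [Nat.add_sub_cancel, show ∀ i : ℕ, 1 + i = i + 1 from fun i => by omega,
        show ∀ j : ℕ, j + m - 1 = j + m' from fun j => by omega, Finset.mul_sum]
    rw [reidx]
    -- swap the two sums
    rw [Finset.sum_comm' (t' := (Finset.range n).filter (fun j => j % 2 = m % 2))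
      (s' := fun j => Finset.Ico j n)
      (by
        intro i' j
        simp only [Finset.mem_range, Finset.mem_filter, Finset.mem_Ico]
        omega)]
    apply Finset.sum_congr rfl
    intro j hj
    simp only [Finset.mem_filter, Finset.mem_range] at hj
    -- rewrite each term with trinomial revision and sum with Vandermonde
    have tri : ∀ i' ∈ Finset.Ico j n,
        n.choose (i' + 1) * ((j + m').choose i' * i'.choose j)
          = (j + m').choose j * (n.choose (i' + 1) * m'.choose (i' - j)) := by
      intro i' hi'
      simp only [Finset.mem_Ico] at hi'
      have := trinom (j + m') i' j hi'.1
      have e : j + m' - j = m' := by omega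
      rw [e] at this
      rw [this]
      ring
    rw [Finset.sum_congr rfl tri, ← Finset.mul_sum, Finset.sum_Ico_eq_sum_range]
    have inner : ∑ k ∈ Finset.range (n - j), n.choose (j + k + 1) * m'.choose (j + k - j)
        = (n + m').choose (j + m' + 1) := by
      rw [← vdm n m' j hj.1]
      apply Finset.sum_congr rfl
      intro k _
      congr 2 <;> omega
    rw [inner]
    congr 1
    exact Nat.choose_symm_of_eq_add rfl
  rw [step1]
  -- Step 2 : pass to ℤ and use the parity decomposition
  have cast_goal : ∀ a b : ℕ, (a : ℤ) = b → a = b := fun a b h => by exact_mod_cast h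
  apply cast_goal
  push_cast
  set c : ℕ → ℤ := fun j => ((j + m').choose m' : ℤ) * (n + m').choose (j + m' + 1) with hc
  have lhs_eq : ∑ j ∈ (Finset.range n).filter (fun j => j % 2 = m % 2),
        (((j + m').choose m' : ℤ) * ((n + m').choose (j + m' + 1) : ℤ))
      = ∑ j ∈ (Finset.range n).filter (fun j => j % 2 = m % 2), c j := rfl
  have two_lhs : 2 * ∑ j ∈ (Finset.range n).filter (fun j => j % 2 = m % 2), c j
      = (∑ j ∈ Finset.range n, c j)
        + ∑ j ∈ Finset.range n, (-1 : ℤ) ^ (j + m) * c j := by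
    rw [← Finset.sum_filter_add_sum_filter_not (Finset.range n) (fun j => j % 2 = m % 2) c,
        ← Finset.sum_filter_add_sum_filter_not (Finset.range n) (fun j => j % 2 = m % 2)
          (fun j => (-1 : ℤ) ^ (j + m) * c j)]
    have h1 : ∀ j ∈ (Finset.range n).filter (fun j => j % 2 = m % 2),
        (-1 : ℤ) ^ (j + m) * c j = c j := by
      intro j hj
      simp only [Finset.mem_filter] at hj
      have : Even (j + m) := by rw [Nat.even_iff]; omega
      rw [(this.neg_one_pow : (-1 : ℤ) ^ (j + m) = 1), one_mul]
    have h2 : ∀ j ∈ (Finset.range n).filter (fun j => ¬ j % 2 = m % 2),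
        (-1 : ℤ) ^ (j + m) * c j = - c j := by
      intro j hj
      simp only [Finset.mem_filter] at hj
      have : Odd (j + m) := by rw [Nat.odd_iff]; omega
      rw [(this.neg_one_pow : (-1 : ℤ) ^ (j + m) = -1)]
      ring
    rw [Finset.sum_congr rfl h1, Finset.sum_congr rfl h2, Finset.sum_neg_distrib]
    ring
  -- evaluate the two sums
  have hF : ∑ j ∈ Finset.range n, c j
      = ∑ i ∈ Finset.range n, 2 ^ i * ((m' + i).choose i : ℤ) := claimF m' n
  have hA : ∑ j ∈ Finset.range n, (-1 : ℤ) ^ (j + m) * c j = (-1 : ℤ) ^ m := by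
    have : ∀ j ∈ Finset.range n, (-1 : ℤ) ^ (j + m) * c j
        = (-1 : ℤ) ^ m * ((-1 : ℤ) ^ j * (j + m').choose m' * (n + m').choose (j + m' + 1)) := by
      intro j _
      rw [hc, pow_add]
      ring
    rw [Finset.sum_congr rfl this, ← Finset.mul_sum, claimA m' n (by omega), mul_one]
  -- evaluate the target RHS sum
  have hRHS : ∑ i ∈ Finset.Icc 1 (n - 1), (2 : ℤ) ^ (i - 1) * ((m + i - 1).choose i : ℤ)
      = ∑ i ∈ Finset.range (n - 1), 2 ^ i * ((m' + i + 1).choose (i + 1) : ℤ) := by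
    rw [show Finset.Icc 1 (n - 1) = Finset.Ico 1 (n - 1 + 1) by rfl, Finset.sum_Ico_eq_sum_range]
    apply Finset.sum_congr (by congr 1 <;> omega)
    intro i _
    rw [show m + (1 + i) - 1 = m' + i + 1 by omega, show 1 + i = i + 1 by omega,
      show i + 1 - 1 = i by omega]
  have hG : ∑ i ∈ Finset.range n, 2 ^ i * ((m' + i).choose i : ℤ)
      = 2 * (∑ i ∈ Finset.range (n - 1), 2 ^ i * ((m' + i + 1).choose (i + 1) : ℤ)) + 1 := by
    have : n = (n - 1) + 1 := by omega
    rw [this, Finset.sum_range_succ']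
    have h4 : ∀ i ∈ Finset.range (n - 1),
        (2 : ℤ) ^ (i + 1) * ((m' + (i + 1)).choose (i + 1) : ℤ)
          = 2 * (2 ^ i * ((m' + i + 1).choose (i + 1) : ℤ)) := by
      intro i _
      rw [pow_succ, show m' + (i + 1) = m' + i + 1 by omega]
      ring
    rw [Finset.sum_congr rfl h4, ← Finset.mul_sum]
    simp
  -- put everything together
  have hEps : ((if Even m then 1 else 0 : ℕ) : ℤ) = (1 + (-1 : ℤ) ^ m) / 2 := by
    rcases Nat.even_or_odd m with h | h
    · rw [if_pos h, h.neg_one_pow]; norm_num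
    · rw [if_neg (Nat.not_even_iff_odd.2 h), h.neg_one_pow]; norm_num
  have final : 2 * ∑ j ∈ (Finset.range n).filter (fun j => j % 2 = m % 2), c j
      = 2 * ((∑ i ∈ Finset.range (n - 1), 2 ^ i * ((m' + i + 1).choose (i + 1) : ℤ))
        + ((if Even m then 1 else 0 : ℕ) : ℤ)) := by
    rw [two_lhs, hF, hA, hG, hEps]
    rcases Nat.even_or_odd m with h | h
    · rw [h.neg_one_pow]; ring
    · rw [h.neg_one_pow]; ring
  have lhs_final := mul_left_cancel₀ (two_ne_zero (α := ℤ)) final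
  rw [lhs_eq, lhs_final, hRHS]
  split_ifs <;> simp
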